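/- Let 𝕜 be a commutative ring, G a finite group, and n ≥ 1. For every G-partition (P,g) of type (l;k), the map Φ(P,g) : V^{⊗k} → V^{⊗l} is a homomorphism of 𝕜[G_n]-modules; moreover Φ(P,g) = Φ(P,h) whenever (P,g) ∼ (P,h). -/

import Mathlib

/-!
Statement 8: for every `G`-partition `(P, g)` of type `(l; k)`, the map
`Φ(P, g) : V^{⊗k} → V^{⊗l}` is a homomorphism of `𝕜[G_n]`-modules (it is `𝕜`-linear by
construction and commutes with the action of every `γ ∈ G_n`), and `Φ(P, g) = Φ(P, h)`
whenever `(P, g) ∼ (P, h)`.  Tensor powers of `V` are realized as free `𝕜`-modules on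
tuples of basis vectors of `V`, and set partitions are encoded as `Setoid`s.
-/

namespace GPC

variable (G : Type*) [Group G]

def wreathAut (n : ℕ) : Equiv.Perm (Fin n) →* MulAut (Fin n → G) where
  toFun π :=
    { toFun := fun g => g ∘ ⇑π⁻¹
      invFun := fun g => g ∘ ⇑π
      left_inv := fun g => by funext i; simp
      right_inv := fun g => by funext i; simp
      map_mul' := fun g h => rfl }
  map_one' := by ext g i; simp
  map_mul' := fun π σ => by ext g i; simp

/-- The wreath product `G_n = Gⁿ ⋊ S_n`. -/
abbrev Wr (n : ℕ) := (Fin n → G) ⋊[wreathAut G n] Equiv.Perm (Fin n)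

variable {G}

/-- Equivalence of `G`-partitions with the same underlying partition `P`
(a set partition is encoded as a `Setoid`, whose classes are the parts):
`(P, g) ∼ (P, g')` iff for every part there is `t ∈ G` with `g' = t * g` on that part. -/
def LabelEquiv {X : Type*} (P : Setoid X) (g g' : X → G) : Prop :=
  ∀ a : X, ∃ t : G, ∀ b : X, P a b → g' b = t * g b

/-- The number of parts of a set partition (encoded as a `Setoid`). -/
noncomputable def numParts {X : Type*} (P : Setoid X) : ℕ := Nat.card (Quotient P)

variable (G) in
/-- The image of the basis vector `g e_i` of `V` under the action of `γ ∈ G_n`: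
`(h π) · (g e_i) = h_{π i} g e_{π i}`. -/
def actBasis (n : ℕ) (γ : Wr G n) (p : G × Fin n) : G × Fin n :=
  (γ.left (γ.right p.2) * p.1, γ.right p.2)

variable (𝕜 : Type*) [CommRing 𝕜] (G) (n : ℕ)

/-- The diagonal action of `γ ∈ G_n` on `V^{⊗k}`, realized on the standard basis
of `V^{⊗k}` given by `k`-tuples of basis vectors of `V`. -/
noncomputable def dAct (k : ℕ) (γ : Wr G n) :
    ((Fin k → G × Fin n) →₀ 𝕜) →ₗ[𝕜] ((Fin k → G × Fin n) →₀ 𝕜) :=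
  Finsupp.lmapDomain 𝕜 𝕜 (fun v j => actBasis G n γ (v j))

variable [Fintype G]

open scoped Classical in
/-- The matrix-entry condition defining `Φ(P, g)`: the entry at `(w, v)` is `1`
iff for all `a, b` in the same part of `P` the indices agree and
`h_a g_a⁻¹ = h_b g_b⁻¹`, where `(h, i)` is read off from `v` on the bottom row
and from `w` on the top row. -/
def phiCond {k l : ℕ} (P : Setoid (Fin k ⊕ Fin l)) (g : Fin k ⊕ Fin l → G)
    (v : Fin k → G × Fin n) (w : Fin l → G × Fin n) : Prop :=
  ∀ a b : Fin k ⊕ Fin l, P a b →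
    (Sum.elim v w a).2 = (Sum.elim v w b).2
      ∧ (Sum.elim v w a).1 * (g a)⁻¹ = (Sum.elim v w b).1 * (g b)⁻¹

open scoped Classical in
/-- The map `Φ(P, g) : V^{⊗k} → V^{⊗l}` attached to a `G`-partition `(P, g)` of
type `(l; k)`, defined by its matrix entries on the standard bases. -/
noncomputable def Phi {k l : ℕ} (P : Setoid (Fin k ⊕ Fin l)) (g : Fin k ⊕ Fin l → G) :
    ((Fin k → G × Fin n) →₀ 𝕜) →ₗ[𝕜] ((Fin l → G × Fin n) →₀ 𝕜) :=
  Finsupp.lift _ 𝕜 _ fun v => ∑ w : Fin l → G × Fin n,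
    if phiCond G n P g v w then Finsupp.single w (1 : 𝕜) else 0

section Aux

variable {𝕜 G n}

/-- `actBasis` as an equivalence. -/
def actEquiv (γ : Wr G n) : G × Fin n ≃ G × Fin n where
  toFun := actBasis G n γ
  invFun := actBasis G n γ⁻¹
  left_inv p := by
    simp [actBasis, wreathAut, mul_assoc, Equiv.Perm.inv_def]
  right_inv p := by
    simp [actBasis, wreathAut, mul_assoc, Equiv.Perm.inv_def]

@[simp] lemma actEquiv_apply (γ : Wr G n) (p : G × Fin n) :
    actEquiv γ p = actBasis G n γ p := rfl

lemma actBasis_pair_iff (γ : Wr G n) (p q : G × Fin n) (x y : G) :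
    ((actBasis G n γ p).2 = (actBasis G n γ q).2
      ∧ (actBasis G n γ p).1 * x = (actBasis G n γ q).1 * y)
    ↔ (p.2 = q.2 ∧ p.1 * x = q.1 * y) := by
  simp only [actBasis]
  constructor
  · rintro ⟨h1, h2⟩
    have h1' : p.2 = q.2 := γ.right.injective h1
    refine ⟨h1', ?_⟩
    rw [h1', mul_assoc, mul_assoc] at h2
    exact mul_left_cancel h2
  · rintro ⟨h1, h2⟩
    refine ⟨by rw [h1], ?_⟩
    rw [h1, mul_assoc, mul_assoc, h2]

lemma phiCond_act {k l : ℕ} (P : Setoid (Fin k ⊕ Fin l)) (g : Fin k ⊕ Fin l → G)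
    (γ : Wr G n) (v : Fin k → G × Fin n) (w : Fin l → G × Fin n) :
    phiCond G n P g (fun j => actBasis G n γ (v j)) (fun j => actBasis G n γ (w j))
      ↔ phiCond G n P g v w := by
  have elim_eq : ∀ a, Sum.elim (fun j => actBasis G n γ (v j))
      (fun j => actBasis G n γ (w j)) a = actBasis G n γ (Sum.elim v w a) := by
    rintro (a | a) <;> rfl
  unfold phiCond
  refine forall_congr' fun a => forall_congr' fun b => imp_congr_right fun _ => ?_
  rw [elim_eq a, elim_eq b]
  exact actBasis_pair_iff γ _ _ _ _

lemma phiCond_label {k l : ℕ} (P : Setoid (Fin k ⊕ Fin l)) (g h : Fin k ⊕ Fin l → G)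
    (hle : LabelEquiv P g h) (v : Fin k → G × Fin n) (w : Fin l → G × Fin n) :
    phiCond G n P g v w ↔ phiCond G n P h v w := by
  unfold phiCond
  refine forall_congr' fun a => forall_congr' fun b => imp_congr_right fun hab => ?_
  obtain ⟨t, ht⟩ := hle a
  have ha : h a = t * g a := ht a (P.refl a)
  have hb : h b = t * g b := ht b hab
  rw [ha, hb]
  simp [mul_inv_rev, ← mul_assoc, mul_left_inj]

variable (𝕜)

open scoped Classical in
lemma Phi_single {k l : ℕ} (P : Setoid (Fin k ⊕ Fin l)) (g : Fin k ⊕ Fin l → G)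
    (v : Fin k → G × Fin n) (c : 𝕜) :
    Phi G 𝕜 n P g (Finsupp.single v c)
      = c • ∑ w : Fin l → G × Fin n,
          if phiCond G n P g v w then Finsupp.single w (1 : 𝕜) else 0 := by
  classical
  simp [Phi, Finsupp.lift_apply, Finsupp.sum_single_index]

lemma dAct_single {k : ℕ} (γ : Wr G n) (v : Fin k → G × Fin n) (c : 𝕜) :
    dAct G 𝕜 n k γ (Finsupp.single v c)
      = Finsupp.single (fun j => actBasis G n γ (v j)) c := by
  simp [dAct, Finsupp.mapDomain_single]

end Aux

theorem Phi_equivariant_and_well_defined (𝕜 : Type*) [CommRing 𝕜]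
    (G : Type*) [Group G] [Fintype G] (n : ℕ) (hn : 1 ≤ n) (k l : ℕ)
    (P : Setoid (Fin k ⊕ Fin l)) (g : Fin k ⊕ Fin l → G) :
    -- `Φ(P, g)` is a homomorphism of `𝕜[G_n]`-modules
    (∀ (γ : Wr G n) (x : (Fin k → G × Fin n) →₀ 𝕜),
      Phi G 𝕜 n P g (dAct G 𝕜 n k γ x) = dAct G 𝕜 n l γ (Phi G 𝕜 n P g x))
    -- `Φ(P, g)` only depends on the equivalence class of `(P, g)`
    ∧ (∀ h : Fin k ⊕ Fin l → G, LabelEquiv P g h → Phi G 𝕜 n P g = Phi G 𝕜 n P h) := by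
  classical
  constructor
  · intro γ x
    induction x using Finsupp.induction_linear with
    | zero => simp
    | add f f' hf hf' => simp [map_add, hf, hf']
    | single v c =>
      rw [dAct_single, Phi_single, Phi_single, map_smul, map_sum]
      congr 1
      rw [← Equiv.sum_comp (Equiv.piCongrRight fun _ : Fin l => actEquiv γ)]
      refine Finset.sum_congr rfl fun w _ => ?_
      have hw : (Equiv.piCongrRight fun _ : Fin l => actEquiv γ) w
          = fun j => actBasis G n γ (w j) := rfl
      rw [hw, phiCond_act, apply_ite (dAct G 𝕜 n l γ), dAct_single, map_zero]
  · intro h hle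
    refine Finsupp.lhom_ext fun v c => ?_
    rw [Phi_single, Phi_single]
    congr 1
    exact Finset.sum_congr rfl fun w _ => by rw [phiCond_label P g h hle v w]

end GPC
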